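/- For every n ≥ 1, the sum N(n) of n(λ) over all partitions λ of n satisfies N(n) ≤ (1/6)n(n+1)p(n), i.e. 6·N(n) ≤ n(n+1)p(n). -/

import Mathlib

/-- The descending list of parts of a partition. -/
def Nat.Partition.descParts {n : ℕ} (P : n.Partition) : List ℕ :=
  (P.parts.sort (· ≤ ·)).reverse

/-- `n(λ) = Σ_{i≥1} (i-1)λ_i` for a partition `λ` listed in decreasing order. -/
def Nat.Partition.nval {n : ℕ} (P : n.Partition) : ℕ :=
  (List.zipWith (· * ·) (List.range P.descParts.length) P.descParts).sum

/-- `N(n) = Σ_{λ ⊢ n} n(λ)`. -/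
def Nfun (n : ℕ) : ℕ := ∑ P : Nat.Partition n, P.nval

open Finset List

/-- `Σ i·lᵢ` for a list. -/
def nvalList (l : List ℕ) : ℕ := (List.zipWith (· * ·) (List.range l.length) l).sum

lemma zipaux : ∀ (R t : List ℕ), t.length ≤ R.length →
    (List.zipWith (fun i x => i * x + x) R t).sum = (List.zipWith (· * ·) R t).sum + t.sum := by
  intro R
  induction R with
  | nil =>
    intro t ht
    simp only [List.length_nil, Nat.le_zero, List.length_eq_zero_iff] at ht
    simp [ht]
  | cons r R ih =>
    intro t ht
    cases t with
    | nil => simp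
    | cons a t =>
      simp only [List.zipWith_cons_cons, List.sum_cons, List.length_cons] at *
      rw [ih t (by omega)]
      ring

lemma nvalList_cons (a : ℕ) (t : List ℕ) : nvalList (a :: t) = nvalList t + t.sum := by
  unfold nvalList
  rw [List.length_cons, List.range_succ_eq_map]
  simp only [List.zipWith_cons_cons, Nat.zero_mul, List.sum_cons, Nat.zero_add]
  rw [List.zipWith_map_left]
  have h : (fun (a : ℕ) (b : ℕ) => a.succ * b) = (fun (i : ℕ) (x : ℕ) => i * x + x) := by
    funext i x; simp [Nat.succ_mul]
  rw [h]
  exact zipaux _ t (by simp)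

lemma map_add_sum (f : ℕ → ℕ) (t : List ℕ) :
    (t.map (fun x => x + f x)).sum = t.sum + (t.map f).sum := by
  induction t with
  | nil => simp
  | cons c u ihu =>
    simp only [List.map_cons, List.sum_cons] at *
    omega

/-- double min sum over a list -/
def dblMin (l : List ℕ) : ℕ := (l.map (fun a => (l.map (fun b => min a b)).sum)).sum

lemma dblMin_eq (l : List ℕ) (hl : l.Pairwise (· ≥ ·)) :
    dblMin l = 2 * nvalList l + l.sum := by
  induction l with
  | nil => simp [dblMin, nvalList]
  | cons a t ih =>
    have ha : ∀ x ∈ t, x ≤ a := fun x hx => (List.pairwise_cons.mp hl).1 x hx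
    have ht : t.Pairwise (· ≥ ·) := (List.pairwise_cons.mp hl).2
    have h1 : (t.map (fun b => min a b)).sum = t.sum := by
      have : t.map (fun b => min a b) = t.map id := by
        apply List.map_congr_left
        intro x hx; exact min_eq_right (ha x hx)
      rw [this, List.map_id]
    unfold dblMin at *
    simp only [List.map_cons, List.sum_cons, min_self]
    rw [h1]
    have h3 : (t.map (fun x => min x a + (t.map (fun b => min x b)).sum)).sum
        = t.sum + (t.map (fun x => (t.map (fun b => min x b)).sum)).sum := by
      have : t.map (fun x => min x a + (t.map (fun b => min x b)).sum)
          = t.map (fun x => x + (t.map (fun b => min x b)).sum) := by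
        apply List.map_congr_left
        intro x hx
        rw [min_eq_left (ha x hx)]
      rw [this]
      exact map_add_sum (fun x => (t.map (fun b => min x b)).sum) t
    rw [h3, ih ht, nvalList_cons]
    ring

namespace NfunAux

lemma coe_descParts {n : ℕ} (P : n.Partition) : (↑P.descParts : Multiset ℕ) = P.parts := by
  rw [Nat.Partition.descParts, Multiset.coe_reverse, Multiset.sort_eq]

lemma descParts_sorted {n : ℕ} (P : n.Partition) : P.descParts.Pairwise (· ≥ ·) := by
  rw [Nat.Partition.descParts]
  rw [List.pairwise_reverse]
  have h := Multiset.pairwise_sort P.parts (· ≤ ·)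
  exact List.Pairwise.imp (fun {a b} hab => hab) h

lemma descParts_sum {n : ℕ} (P : n.Partition) : P.descParts.sum = n := by
  have := congrArg Multiset.sum (coe_descParts P)
  simpa [P.parts_sum] using this

lemma mem_Icc_of_mem_parts {n : ℕ} (P : n.Partition) {m : ℕ} (hm : m ∈ P.parts) :
    m ∈ Icc 1 n := by
  rw [Finset.mem_Icc]
  constructor
  · exact P.parts_pos hm
  · have := Multiset.single_le_sum (fun x _ => Nat.zero_le x) m hm
    simpa [P.parts_sum] using this

/-- counting lemma: sum over a finset of count-weighted values equals map-sum. -/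
lemma count_weight_sum (A : Finset ℕ) :
    ∀ (l : List ℕ), (∀ x ∈ l, x ∈ A) → ∀ (f : ℕ → ℕ),
      (∑ a ∈ A, l.count a * f a) = (l.map f).sum := by
  intro l
  induction l with
  | nil => intro _ f; simp
  | cons c t ih =>
    intro hmem f
    simp only [List.map_cons, List.sum_cons]
    have hc : c ∈ A := hmem c List.mem_cons_self
    have ht : ∀ x ∈ t, x ∈ A := fun x hx => hmem x (List.mem_cons_of_mem _ hx)
    rw [← ih ht f]
    have hsplit : ∀ a ∈ A, (c :: t).count a * f a
        = (if a = c then f c else 0) + t.count a * f a := by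
      intro a _
      rw [List.count_cons]
      by_cases hac : a = c
      · subst hac; simp [Nat.add_mul]; ring
      · have : (c == a) = false := by
          simp [beq_eq_false_iff_ne]
          exact fun h => hac h.symm
        simp [if_neg hac, this]
    rw [Finset.sum_congr rfl hsplit, Finset.sum_add_distrib, Finset.sum_ite_eq' A c (fun _ => f c),
      if_pos hc]

end NfunAux

namespace NfunAux

def pc (m : ℕ) : ℕ := Fintype.card (Nat.Partition m)

def SS (x : (ℕ × ℕ) × ℕ × ℕ) : ℕ :=
  if x.1.1 = x.1.2 then x.1.1 * max x.2.1 x.2.2 else x.1.1 * x.2.1 + x.1.2 * x.2.2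

def RR (x : (ℕ × ℕ) × ℕ × ℕ) : Multiset ℕ :=
  if x.1.1 = x.1.2 then Multiset.replicate (max x.2.1 x.2.2) x.1.1
  else Multiset.replicate x.2.1 x.1.1 + Multiset.replicate x.2.2 x.1.2

lemma RR_sum (x : (ℕ × ℕ) × ℕ × ℕ) : (RR x).sum = SS x := by
  rcases x with ⟨⟨a, b⟩, j1, j2⟩
  by_cases h : a = b <;>
    simp [RR, SS, h, Multiset.sum_replicate, Nat.mul_comm]

lemma zero_notMem_RR (x : (ℕ × ℕ) × ℕ × ℕ) (ha : 1 ≤ x.1.1) (hb : 1 ≤ x.1.2) :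
    0 ∉ RR x := by
  rcases x with ⟨⟨a, b⟩, j1, j2⟩
  simp only at ha hb
  simp only [RR]
  split_ifs with h
  · intro hmem
    have := Multiset.eq_of_mem_replicate hmem
    omega
  · intro hmem
    rcases Multiset.mem_add.mp hmem with hm | hm <;>
      (have := Multiset.eq_of_mem_replicate hm; omega)

lemma RR_le_iff (x : (ℕ × ℕ) × ℕ × ℕ) (s : Multiset ℕ) :
    RR x ≤ s ↔ x.2.1 ≤ s.count x.1.1 ∧ x.2.2 ≤ s.count x.1.2 := by
  rcases x with ⟨⟨a, b⟩, j1, j2⟩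
  simp only
  by_cases h : a = b
  · subst h
    have hR : RR ((a, a), j1, j2) = Multiset.replicate (max j1 j2) a := by simp [RR]
    rw [hR, ← Multiset.le_count_iff_replicate_le]
    omega
  · have hba : b ≠ a := fun hh => h hh.symm
    have hR : RR ((a, b), j1, j2)
        = Multiset.replicate j1 a + Multiset.replicate j2 b := by simp [RR, h]
    rw [hR, Multiset.le_iff_count]
    constructor
    · intro hc
      constructor
      · have := hc a
        simpa [Multiset.count_add, Multiset.count_replicate, hba] using this
      · have := hc b
        simpa [Multiset.count_add, Multiset.count_replicate, h] using this
    · rintro ⟨h1, h2⟩ c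
      rw [Multiset.count_add, Multiset.count_replicate, Multiset.count_replicate]
      by_cases hca : a = c
      · subst hca
        simp [hba]
        omega
      · by_cases hcb : b = c
        · subst hcb
          simp [hca]
          omega
        · simp [hca, hcb]

def subEquiv (n : ℕ) (r : Multiset ℕ) (h0 : 0 ∉ r) (hr : r.sum ≤ n) :
    { P : Nat.Partition n // r ≤ P.parts } ≃ Nat.Partition (n - r.sum) where
  toFun := fun ⟨P, hP⟩ =>
    ⟨P.parts - r,
     fun {i} hi => P.parts_pos (Multiset.mem_of_le (Multiset.sub_le_self _ _) hi),
     by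
       have h1 : P.parts - r + r = P.parts := tsub_add_cancel_of_le hP
       have h2 := congrArg Multiset.sum h1
       rw [Multiset.sum_add, P.parts_sum] at h2
       omega⟩
  invFun := fun Q =>
    ⟨⟨Q.parts + r,
      fun {i} hi => by
        rcases Multiset.mem_add.mp hi with hm | hm
        · exact Q.parts_pos hm
        · rcases Nat.eq_zero_or_pos i with hzero | hpos
          · exact absurd (hzero ▸ hm) h0
          · exact hpos,
      by rw [Multiset.sum_add, Q.parts_sum]; omega⟩,
     Multiset.le_add_left _ _⟩
  left_inv := by
    rintro ⟨P, hP⟩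
    apply Subtype.ext
    apply Nat.Partition.ext
    exact tsub_add_cancel_of_le hP
  right_inv := by
    intro Q
    apply Nat.Partition.ext
    exact add_tsub_cancel_right _ _

lemma sum_indicator_eq (n : ℕ) (r : Multiset ℕ) (h0 : 0 ∉ r) :
    (∑ P : Nat.Partition n, if r ≤ P.parts then 1 else 0) =
      if r.sum ≤ n then pc (n - r.sum) else 0 := by
  classical
  rw [← Finset.card_filter]
  by_cases hr : r.sum ≤ n
  · rw [if_pos hr]
    have := Fintype.card_congr (subEquiv n r h0 hr)
    rw [Fintype.card_subtype] at this
    rw [this, pc]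
  · rw [if_neg hr]
    have hempty : Finset.filter (fun P : Nat.Partition n => r ≤ P.parts) Finset.univ = ∅ := by
      apply Finset.filter_eq_empty_iff.mpr
      intro P _
      intro hle
      apply hr
      calc r.sum ≤ P.parts.sum := by
            have h1 : P.parts - r + r = P.parts := tsub_add_cancel_of_le hle
            have h2 := congrArg Multiset.sum h1
            rw [Multiset.sum_add] at h2
            omega
        _ = n := P.parts_sum
    rw [hempty]
    simp

end NfunAux
namespace NfunAux

def G2 (n : ℕ) : Finset (ℕ × ℕ) := Icc 1 n ×ˢ Icc 1 n

def G4 (n : ℕ) : Finset ((ℕ × ℕ) × ℕ × ℕ) := G2 n ×ˢ G2 n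

variable {n : ℕ}

lemma map_mul_sum_left (a : ℕ) (l : List ℕ) : (l.map (fun b => a * b)).sum = a * l.sum := by
  induction l with
  | nil => simp
  | cons c t ih => simp only [List.map_cons, List.sum_cons, ih]; ring

lemma map_mul_sum_right (a : ℕ) (l : List ℕ) : (l.map (fun b => b * a)).sum = l.sum * a := by
  induction l with
  | nil => simp
  | cons c t ih => simp only [List.map_cons, List.sum_cons, ih]; ring

lemma card_le_sum_multiset : ∀ (s : Multiset ℕ), (∀ x ∈ s, 1 ≤ x) →
    Multiset.card s ≤ s.sum := by
  intro s
  refine Multiset.induction_on s (by simp) ?_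
  intro a t hih h
  simp only [Multiset.card_cons, Multiset.sum_cons]
  have ha : 1 ≤ a := h a (Multiset.mem_cons_self a t)
  have := hih (fun x hx => h x (Multiset.mem_cons_of_mem hx))
  omega

lemma cnt_le (P : Nat.Partition n) (a : ℕ) : P.parts.count a ≤ n := by
  calc P.parts.count a ≤ Multiset.card P.parts := Multiset.count_le_card _ _
    _ ≤ P.parts.sum := card_le_sum_multiset _ (fun _ hx => P.parts_pos hx)
    _ = n := P.parts_sum

lemma sum_ind_Icc (c : ℕ) (hc : c ≤ n) :
    (∑ j ∈ Icc 1 n, if j ≤ c then 1 else 0) = c := by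
  rw [← Finset.card_filter]
  have h : (Icc 1 n).filter (fun j => j ≤ c) = Icc 1 c := by
    ext j
    simp only [Finset.mem_Icc, Finset.mem_filter]
    omega
  rw [h, Nat.card_Icc]
  omega

lemma sum_ind_pair (P : Nat.Partition n) (a b : ℕ) :
    (∑ q ∈ G2 n, if RR ((a, b), q) ≤ P.parts then 1 else 0)
      = P.parts.count a * P.parts.count b := by
  rw [G2, Finset.sum_product]
  have h : ∀ j1 j2 : ℕ, (if RR ((a, b), (j1, j2)) ≤ P.parts then (1:ℕ) else 0)
      = (if j1 ≤ P.parts.count a then 1 else 0)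
        * (if j2 ≤ P.parts.count b then 1 else 0) := by
    intro j1 j2
    rw [show (if RR ((a, b), (j1, j2)) ≤ P.parts then (1:ℕ) else 0)
        = (if (j1 ≤ P.parts.count a ∧ j2 ≤ P.parts.count b) then (1:ℕ) else 0) from by
      congr 1
      · exact propext (RR_le_iff ((a, b), (j1, j2)) P.parts)]
    by_cases h1 : j1 ≤ P.parts.count a <;> by_cases h2 : j2 ≤ P.parts.count b <;>
      simp [h1, h2]
  simp_rw [h]
  rw [← Finset.sum_mul_sum]
  rw [sum_ind_Icc _ (cnt_le P a), sum_ind_Icc _ (cnt_le P b)]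

lemma sum_G4_weight (P : Nat.Partition n) (w : ℕ → ℕ → ℕ) :
    (∑ x ∈ G4 n, w x.1.1 x.1.2 * (if RR x ≤ P.parts then 1 else 0))
      = ∑ p ∈ G2 n, w p.1 p.2 * (P.parts.count p.1 * P.parts.count p.2) := by
  rw [G4, Finset.sum_product]
  apply Finset.sum_congr rfl
  intro p _
  rcases p with ⟨a, b⟩
  dsimp only
  rw [← Finset.mul_sum]
  rw [sum_ind_pair P a b]

lemma descParts_mem_Icc (P : Nat.Partition n) :
    ∀ x ∈ P.descParts, x ∈ Icc 1 n := by
  intro x hx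
  apply mem_Icc_of_mem_parts P
  rw [← coe_descParts P]
  exact Multiset.mem_coe.mpr hx

lemma count_coe_parts (P : Nat.Partition n) (a : ℕ) :
    P.parts.count a = P.descParts.count a := by
  rw [← coe_descParts P, Multiset.coe_count]

lemma sum_G2_weight (P : Nat.Partition n) (w : ℕ → ℕ → ℕ) :
    (∑ p ∈ G2 n, w p.1 p.2 * (P.parts.count p.1 * P.parts.count p.2))
      = (P.descParts.map (fun a => (P.descParts.map (fun b => w a b)).sum)).sum := by
  rw [G2, Finset.sum_product]
  have h1 : ∀ a : ℕ, (∑ b ∈ Icc 1 n, w a b * (P.parts.count a * P.parts.count b))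
      = P.parts.count a * ((P.descParts.map (fun b => w a b)).sum) := by
    intro a
    rw [← count_weight_sum (Icc 1 n) P.descParts (descParts_mem_Icc P) (fun b => w a b),
      Finset.mul_sum]
    apply Finset.sum_congr rfl
    intro b _
    rw [count_coe_parts P b]
    ring
  simp_rw [h1]
  rw [← count_weight_sum (Icc 1 n) P.descParts (descParts_mem_Icc P)
    (fun a => (P.descParts.map (fun b => w a b)).sum)]
  apply Finset.sum_congr rfl
  intro a _
  rw [count_coe_parts P a]

/-- Per-partition identity for the min weight. -/
lemma per_partition_min (P : Nat.Partition n) :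
    (∑ x ∈ G4 n, min x.1.1 x.1.2 * (if RR x ≤ P.parts then 1 else 0))
      = 2 * P.nval + n := by
  rw [sum_G4_weight P (fun a b => min a b), sum_G2_weight P (fun a b => min a b)]
  have hd : (P.descParts.map (fun a => (P.descParts.map (fun b => min a b)).sum)).sum
      = dblMin P.descParts := rfl
  rw [hd, dblMin_eq P.descParts (descParts_sorted P), descParts_sum P]
  rfl

/-- Per-partition identity for the product weight. -/
lemma per_partition_mul (P : Nat.Partition n) :
    (∑ x ∈ G4 n, (x.1.1 * x.1.2) * (if RR x ≤ P.parts then 1 else 0))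
      = n * n := by
  rw [sum_G4_weight P (fun a b => a * b), sum_G2_weight P (fun a b => a * b)]
  have h1 : ∀ a : ℕ, (P.descParts.map (fun b => a * b)).sum = a * n := by
    intro a
    rw [map_mul_sum_left, descParts_sum P]
  simp_rw [h1]
  rw [map_mul_sum_right, descParts_sum P]

/-- Per-partition identity for single indices. -/
lemma per_partition_single (P : Nat.Partition n) :
    (∑ p ∈ G2 n, p.1 * (if RR ((p.1, p.1), (p.2, p.2)) ≤ P.parts then 1 else 0)) = n := by
  rw [G2, Finset.sum_product]
  have h : ∀ a j : ℕ, (if RR ((a, a), (j, j)) ≤ P.parts then (1:ℕ) else 0)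
      = (if j ≤ P.parts.count a then 1 else 0) := by
    intro a j
    congr 1
    rw [propext (RR_le_iff ((a, a), (j, j)) P.parts)]
    simp
  simp_rw [h]
  have h2 : ∀ a : ℕ, (∑ j ∈ Icc 1 n, a * (if j ≤ P.parts.count a then (1:ℕ) else 0))
      = a * P.parts.count a := by
    intro a
    rw [← Finset.mul_sum, sum_ind_Icc _ (cnt_le P a)]
  simp_rw [h2]
  have h3 := count_weight_sum (Icc 1 n) P.descParts (descParts_mem_Icc P) (fun a => a)
  calc (∑ a ∈ Icc 1 n, a * P.parts.count a)
      = ∑ a ∈ Icc 1 n, P.descParts.count a * a := by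
        apply Finset.sum_congr rfl
        intro a _
        rw [count_coe_parts P a]
        ring
    _ = (P.descParts.map (fun a => a)).sum := h3
    _ = n := by rw [List.map_id', descParts_sum P]

end NfunAux
namespace NfunAux

variable {n : ℕ}

lemma mem_G4_iff {m : ℕ} (x : (ℕ × ℕ) × ℕ × ℕ) :
    x ∈ G4 m ↔ (1 ≤ x.1.1 ∧ x.1.1 ≤ m) ∧ (1 ≤ x.1.2 ∧ x.1.2 ≤ m)
      ∧ (1 ≤ x.2.1 ∧ x.2.1 ≤ m) ∧ (1 ≤ x.2.2 ∧ x.2.2 ≤ m) := by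
  rcases x with ⟨⟨a, b⟩, j1, j2⟩
  simp [G4, G2, Finset.mem_product, Finset.mem_Icc]
  tauto

lemma SS_bounds (x : (ℕ × ℕ) × ℕ × ℕ) (ha : 1 ≤ x.1.1) (hb : 1 ≤ x.1.2)
    (hj1 : 1 ≤ x.2.1) (hj2 : 1 ≤ x.2.2) :
    1 ≤ SS x ∧ x.1.1 ≤ SS x ∧ x.1.2 ≤ SS x ∧ x.2.1 ≤ SS x ∧ x.2.2 ≤ SS x := by
  rcases x with ⟨⟨a, b⟩, j1, j2⟩
  simp only [SS] at *
  by_cases h : a = b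
  · subst h
    rw [if_pos rfl]
    have hmax : 1 ≤ max j1 j2 := le_trans hj1 (le_max_left _ _)
    have h1 : a * 1 ≤ a * max j1 j2 := Nat.mul_le_mul_left a hmax
    have h2 : 1 * max j1 j2 ≤ a * max j1 j2 := Nat.mul_le_mul_right _ ha
    have h3 : j1 ≤ max j1 j2 := le_max_left _ _
    have h4 : j2 ≤ max j1 j2 := le_max_right _ _
    simp only [Nat.mul_one] at h1
    simp only [Nat.one_mul] at h2
    refine ⟨by omega, by omega, by omega, by omega, by omega⟩
  · rw [if_neg h]
    have h1 : a * 1 ≤ a * j1 := Nat.mul_le_mul_left a hj1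
    have h2 : 1 * j1 ≤ a * j1 := Nat.mul_le_mul_right _ ha
    have h3 : b * 1 ≤ b * j2 := Nat.mul_le_mul_left b hj2
    have h4 : 1 * j2 ≤ b * j2 := Nat.mul_le_mul_right _ hb
    simp only [Nat.mul_one] at h1 h3
    simp only [Nat.one_mul] at h2 h4
    refine ⟨by omega, by omega, by omega, by omega, by omega⟩

def PV (n : ℕ) (x : (ℕ × ℕ) × ℕ × ℕ) : ℕ := if SS x ≤ n then pc (n - SS x) else 0

lemma sum_partitions_ind (x : (ℕ × ℕ) × ℕ × ℕ) (ha : 1 ≤ x.1.1) (hb : 1 ≤ x.1.2) :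
    (∑ P : Nat.Partition n, if RR x ≤ P.parts then 1 else 0) = PV n x := by
  rw [sum_indicator_eq n (RR x) (zero_notMem_RR x ha hb), RR_sum, PV]

/-- The fibers -/
def FF (s : ℕ) : Finset ((ℕ × ℕ) × ℕ × ℕ) := (G4 s).filter (fun x => SS x = s)

def vv (s : ℕ) : ℕ := ∑ x ∈ FF s, min x.1.1 x.1.2

def ww (s : ℕ) : ℕ := ∑ x ∈ FF s, x.1.1 * x.1.2

lemma fiber_eq (s : ℕ) (hs1 : 1 ≤ s) (hsn : s ≤ n) :
    (G4 n).filter (fun x => SS x ≤ n ∧ SS x = s) = FF s := by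
  rw [FF]
  ext x
  simp only [Finset.mem_filter, mem_G4_iff]
  constructor
  · rintro ⟨⟨h1, h2, h3, h4⟩, _, hss⟩
    obtain ⟨_, c1, c2, c3, c4⟩ := SS_bounds x h1.1 h2.1 h3.1 h4.1
    rw [hss] at c1 c2 c3 c4
    exact ⟨⟨⟨h1.1, c1⟩, ⟨h2.1, c2⟩, ⟨h3.1, c3⟩, ⟨h4.1, c4⟩⟩, hss⟩
  · rintro ⟨⟨h1, h2, h3, h4⟩, hss⟩
    exact ⟨⟨⟨h1.1, le_trans h1.2 hsn⟩, ⟨h2.1, le_trans h2.2 hsn⟩,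
      ⟨h3.1, le_trans h3.2 hsn⟩, ⟨h4.1, le_trans h4.2 hsn⟩⟩, by omega, hss⟩

/-- fibering a weighted sum over the index set -/
lemma fiber_sum (f : (ℕ × ℕ) × ℕ × ℕ → ℕ) :
    (∑ x ∈ G4 n, f x * PV n x)
      = ∑ s ∈ Icc 1 n, (∑ x ∈ FF s, f x) * pc (n - s) := by
  have step1 : (∑ x ∈ G4 n, f x * PV n x)
      = ∑ x ∈ (G4 n).filter (fun x => SS x ≤ n), f x * pc (n - SS x) := by
    rw [Finset.sum_filter]
    apply Finset.sum_congr rfl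
    intro x _
    rw [PV, mul_ite, Nat.mul_zero]
  rw [step1]
  have hmaps : ∀ x ∈ (G4 n).filter (fun x => SS x ≤ n), SS x ∈ Icc 1 n := by
    intro x hx
    rw [Finset.mem_filter] at hx
    obtain ⟨hx1, hx2⟩ := hx
    rw [mem_G4_iff] at hx1
    obtain ⟨h1, h2, h3, h4⟩ := hx1
    obtain ⟨c0, -⟩ := SS_bounds x h1.1 h2.1 h3.1 h4.1
    rw [Finset.mem_Icc]
    exact ⟨c0, hx2⟩
  rw [← Finset.sum_fiberwise_of_maps_to hmaps (fun x => f x * pc (n - SS x))]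
  apply Finset.sum_congr rfl
  intro s hs
  rw [Finset.mem_Icc] at hs
  have : ((G4 n).filter (fun x => SS x ≤ n)).filter (fun x => SS x = s) = FF s := by
    rw [Finset.filter_filter]
    exact fiber_eq s hs.1 hs.2
  rw [this, Finset.sum_mul]
  apply Finset.sum_congr rfl
  intro x hx
  rw [FF, Finset.mem_filter] at hx
  rw [hx.2]

/-- Global identity A -/
lemma global_min : 2 * Nfun n + n * pc n = ∑ s ∈ Icc 1 n, vv s * pc (n - s) := by
  have h1 : (∑ P : Nat.Partition n, (2 * P.nval + n))
      = 2 * Nfun n + n * pc n := by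
    rw [Finset.sum_add_distrib, Finset.sum_const, smul_eq_mul, ← Finset.mul_sum, Nfun, pc,
      Fintype.card]
    ring
  rw [← h1]
  have h2 : (∑ P : Nat.Partition n, (2 * P.nval + n))
      = ∑ P : Nat.Partition n, ∑ x ∈ G4 n, min x.1.1 x.1.2 * (if RR x ≤ P.parts then 1 else 0) := by
    apply Finset.sum_congr rfl
    intro P _
    rw [per_partition_min P]
  rw [h2, Finset.sum_comm]
  have h3 : ∀ x ∈ G4 n,
      (∑ P : Nat.Partition n, min x.1.1 x.1.2 * (if RR x ≤ P.parts then 1 else 0))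
        = min x.1.1 x.1.2 * PV n x := by
    intro x hx
    rw [← Finset.mul_sum]
    rw [mem_G4_iff] at hx
    rw [sum_partitions_ind x hx.1.1 hx.2.1.1]
  rw [Finset.sum_congr rfl h3, fiber_sum (fun x => min x.1.1 x.1.2)]
  rfl

/-- Global identity B -/
lemma global_mul : n * n * pc n = ∑ s ∈ Icc 1 n, ww s * pc (n - s) := by
  have h2 : (∑ P : Nat.Partition n, n * n)
      = ∑ P : Nat.Partition n, ∑ x ∈ G4 n, (x.1.1 * x.1.2) * (if RR x ≤ P.parts then 1 else 0) := by
    apply Finset.sum_congr rfl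
    intro P _
    rw [per_partition_mul P]
  have h1 : (∑ _P : Nat.Partition n, n * n) = n * n * pc n := by
    rw [Finset.sum_const, smul_eq_mul, pc, Fintype.card]
    ring
  rw [← h1, h2, Finset.sum_comm]
  have h3 : ∀ x ∈ G4 n,
      (∑ P : Nat.Partition n, (x.1.1 * x.1.2) * (if RR x ≤ P.parts then 1 else 0))
        = (x.1.1 * x.1.2) * PV n x := by
    intro x hx
    rw [← Finset.mul_sum]
    rw [mem_G4_iff] at hx
    rw [sum_partitions_ind x hx.1.1 hx.2.1.1]
  rw [Finset.sum_congr rfl h3, fiber_sum (fun x => x.1.1 * x.1.2)]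
  rfl

end NfunAux
namespace NfunAux

variable {n : ℕ}

lemma mem_G2_iff {m : ℕ} (p : ℕ × ℕ) :
    p ∈ G2 m ↔ (1 ≤ p.1 ∧ p.1 ≤ m) ∧ (1 ≤ p.2 ∧ p.2 ≤ m) := by
  rcases p with ⟨a, j⟩
  simp [G2, Finset.mem_product, Finset.mem_Icc]

lemma SS_diag (a j : ℕ) : SS ((a, a), (j, j)) = a * j := by
  simp [SS]

def FF2 (s : ℕ) : Finset (ℕ × ℕ) := (G2 s).filter (fun p => p.1 * p.2 = s)

def uu (s : ℕ) : ℕ := ∑ p ∈ FF2 s, p.1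

lemma mul_bounds (a j : ℕ) (ha : 1 ≤ a) (hj : 1 ≤ j) :
    1 ≤ a * j ∧ a ≤ a * j ∧ j ≤ a * j := by
  have h1 : a * 1 ≤ a * j := Nat.mul_le_mul_left a hj
  have h2 : 1 * j ≤ a * j := Nat.mul_le_mul_right _ ha
  simp only [Nat.mul_one] at h1
  simp only [Nat.one_mul] at h2
  refine ⟨by omega, h1, h2⟩

lemma fiber2_eq (s : ℕ) (hsn : s ≤ n) :
    (G2 n).filter (fun p => p.1 * p.2 ≤ n ∧ p.1 * p.2 = s) = FF2 s := by
  rw [FF2]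
  ext p
  simp only [Finset.mem_filter, mem_G2_iff]
  constructor
  · rintro ⟨⟨h1, h2⟩, _, hps⟩
    obtain ⟨-, c1, c2⟩ := mul_bounds p.1 p.2 h1.1 h2.1
    rw [hps] at c1 c2
    exact ⟨⟨⟨h1.1, c1⟩, ⟨h2.1, c2⟩⟩, hps⟩
  · rintro ⟨⟨h1, h2⟩, hps⟩
    exact ⟨⟨⟨h1.1, le_trans h1.2 hsn⟩, ⟨h2.1, le_trans h2.2 hsn⟩⟩, by omega, hps⟩

/-- Global identity C -/
lemma global_single : n * pc n = ∑ s ∈ Icc 1 n, uu s * pc (n - s) := by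
  have h1 : (∑ _P : Nat.Partition n, n) = n * pc n := by
    rw [Finset.sum_const, smul_eq_mul, pc, Fintype.card]
    ring
  rw [← h1]
  have h2 : (∑ P : Nat.Partition n, n)
      = ∑ P : Nat.Partition n, ∑ p ∈ G2 n,
          p.1 * (if RR ((p.1, p.1), (p.2, p.2)) ≤ P.parts then 1 else 0) := by
    apply Finset.sum_congr rfl
    intro P _
    rw [per_partition_single P]
  rw [h2, Finset.sum_comm]
  have h3 : ∀ p ∈ G2 n,
      (∑ P : Nat.Partition n, p.1 * (if RR ((p.1, p.1), (p.2, p.2)) ≤ P.parts then 1 else 0))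
        = p.1 * (if p.1 * p.2 ≤ n then pc (n - p.1 * p.2) else 0) := by
    intro p hp
    rw [← Finset.mul_sum]
    rw [mem_G2_iff] at hp
    rw [sum_partitions_ind ((p.1, p.1), (p.2, p.2)) hp.1.1 hp.1.1, PV, SS_diag]
  rw [Finset.sum_congr rfl h3]
  have step1 : (∑ p ∈ G2 n, p.1 * (if p.1 * p.2 ≤ n then pc (n - p.1 * p.2) else 0))
      = ∑ p ∈ (G2 n).filter (fun p => p.1 * p.2 ≤ n), p.1 * pc (n - p.1 * p.2) := by
    rw [Finset.sum_filter]
    apply Finset.sum_congr rfl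
    intro p _
    rw [mul_ite, Nat.mul_zero]
  rw [step1]
  have hmaps : ∀ p ∈ (G2 n).filter (fun p => p.1 * p.2 ≤ n), p.1 * p.2 ∈ Icc 1 n := by
    intro p hp
    rw [Finset.mem_filter] at hp
    obtain ⟨hp1, hp2⟩ := hp
    rw [mem_G2_iff] at hp1
    obtain ⟨c0, -, -⟩ := mul_bounds p.1 p.2 hp1.1.1 hp1.2.1
    rw [Finset.mem_Icc]
    exact ⟨c0, hp2⟩
  rw [← Finset.sum_fiberwise_of_maps_to hmaps (fun p => p.1 * pc (n - p.1 * p.2))]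
  apply Finset.sum_congr rfl
  intro s hs
  rw [Finset.mem_Icc] at hs
  have hff : ((G2 n).filter (fun p => p.1 * p.2 ≤ n)).filter (fun p => p.1 * p.2 = s) = FF2 s := by
    rw [Finset.filter_filter]
    exact fiber2_eq s hs.2
  rw [hff, uu, Finset.sum_mul]
  apply Finset.sum_congr rfl
  intro p hp
  rw [FF2, Finset.mem_filter] at hp
  rw [hp.2]

end NfunAux
namespace NfunAux

/-- the error weight -/
def EE (c : ℕ × ℕ) : ℕ :=
  2 * (if c = (1, 1) then 1 else 0) + (if c = (1, 2) then 1 else 0)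
    + (if c = (2, 1) then 1 else 0) + 2 * (if c = (2, 2) then 1 else 0)

lemma emin (a b : ℕ) (ha : 1 ≤ a) (hb : 1 ≤ b) : 3 * min a b ≤ a * b + EE (a, b) := by
  rcases le_total a b with h | h
  · rw [min_eq_left h]
    by_cases h3 : 3 ≤ b
    · have hm : a * 3 ≤ a * b := Nat.mul_le_mul_left a h3
      have hE : 0 ≤ EE (a, b) := Nat.zero_le _
      omega
    · have ha2 : a ≤ 2 := by omega
      have hb2 : b ≤ 2 := by omega
      interval_cases a <;> interval_cases b <;> simp [EE] <;> omega
  · rw [min_eq_right h]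
    by_cases h3 : 3 ≤ a
    · have hm : 3 * b ≤ a * b := Nat.mul_le_mul_right b h3
      have hE : 0 ≤ EE (a, b) := Nat.zero_le _
      omega
    · have ha2 : a ≤ 2 := by omega
      have hb2 : b ≤ 2 := by omega
      interval_cases a <;> interval_cases b <;> simp [EE] <;> omega

lemma mem_FF {s : ℕ} {x : (ℕ × ℕ) × ℕ × ℕ} (hx : x ∈ FF s) :
    (1 ≤ x.1.1 ∧ x.1.1 ≤ s) ∧ (1 ≤ x.1.2 ∧ x.1.2 ≤ s)
      ∧ (1 ≤ x.2.1 ∧ x.2.1 ≤ s) ∧ (1 ≤ x.2.2 ∧ x.2.2 ≤ s) ∧ SS x = s := by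
  rw [FF, Finset.mem_filter, mem_G4_iff] at hx
  tauto

lemma card_filter_diag (s a : ℕ) (ha : 1 ≤ a) :
    ((FF s).filter (fun x => x.1 = (a, a))).card ≤ 2 * s := by
  classical
  set T : Finset (ℕ × ℕ) := ({s / a} ×ˢ Icc 1 s) ∪ (Icc 1 s ×ˢ {s / a}) with hT
  have hmap : ∀ x ∈ (FF s).filter (fun x => x.1 = (a, a)), x.2 ∈ T := by
    intro x hx
    rw [Finset.mem_filter] at hx
    obtain ⟨hFF, hab⟩ := hx
    obtain ⟨h1, h2, h3, h4, hss⟩ := mem_FF hFF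
    have hSSx : SS x = x.1.1 * max x.2.1 x.2.2 := by
      rw [SS, if_pos]
      rw [hab]
    have hdiv : s / a = max x.2.1 x.2.2 := by
      rw [← hss, hSSx, hab]
      exact Nat.mul_div_cancel_left _ (by omega)
    rw [hT, Finset.mem_union, Finset.mem_product, Finset.mem_product, Finset.mem_singleton,
      Finset.mem_singleton, Finset.mem_Icc, Finset.mem_Icc]
    rcases Nat.le_total x.2.1 x.2.2 with hmx | hmx
    · right
      refine ⟨⟨h3.1, h3.2⟩, ?_⟩
      rw [hdiv]
      omega
    · left
      refine ⟨?_, ⟨h4.1, h4.2⟩⟩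
      rw [hdiv]
      omega
  have hinj : Set.InjOn (fun x : (ℕ × ℕ) × ℕ × ℕ => x.2)
      ↑((FF s).filter (fun x => x.1 = (a, a))) := by
    intro x hx y hy hxy
    simp only [Finset.coe_filter, Set.mem_setOf_eq] at hx hy
    have : x.1 = y.1 := by rw [hx.2, hy.2]
    exact Prod.ext this hxy
  calc ((FF s).filter (fun x => x.1 = (a, a))).card ≤ T.card :=
        Finset.card_le_card_of_injOn _ hmap hinj
    _ ≤ ({s / a} ×ˢ Icc 1 s).card + ((Icc 1 s) ×ˢ ({s / a} : Finset ℕ)).card :=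
        Finset.card_union_le _ _
    _ ≤ 2 * s := by
        rw [Finset.card_product, Finset.card_product, Finset.card_singleton, Nat.card_Icc]
        omega

lemma card_filter_off (s a b : ℕ) (hab : a ≠ b) (ha : 1 ≤ a) :
    ((FF s).filter (fun x => x.1 = (a, b))).card ≤ s := by
  classical
  have hmap : ∀ x ∈ (FF s).filter (fun x => x.1 = (a, b)), x.2.2 ∈ Icc 1 s := by
    intro x hx
    rw [Finset.mem_filter] at hx
    obtain ⟨hFF, _⟩ := hx
    obtain ⟨_, _, _, h4, _⟩ := mem_FF hFF
    rw [Finset.mem_Icc]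
    exact h4
  have hinj : Set.InjOn (fun x : (ℕ × ℕ) × ℕ × ℕ => x.2.2)
      ↑((FF s).filter (fun x => x.1 = (a, b))) := by
    intro x hx y hy hxy
    simp only [Finset.coe_filter, Set.mem_setOf_eq] at hx hy
    obtain ⟨hFFx, habx⟩ := hx
    obtain ⟨hFFy, haby⟩ := hy
    obtain ⟨_, _, _, _, hssx⟩ := mem_FF hFFx
    obtain ⟨_, _, _, _, hssy⟩ := mem_FF hFFy
    have hSSx : SS x = a * x.2.1 + b * x.2.2 := by
      rw [SS, if_neg]
      · rw [habx]
      · rw [habx]; exact hab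
    have hSSy : SS y = a * y.2.1 + b * y.2.2 := by
      rw [SS, if_neg]
      · rw [haby]
      · rw [haby]; exact hab
    have hxy' : x.2.2 = y.2.2 := hxy
    have hj1 : x.2.1 = y.2.1 := by
      have hth := hssx.trans hssy.symm
      rw [hSSx, hSSy, hxy'] at hth
      have := Nat.add_right_cancel hth
      exact Nat.eq_of_mul_eq_mul_left (by omega) this
    have h2 : x.2 = y.2 := Prod.ext hj1 hxy' 
    have h1 : x.1 = y.1 := by rw [habx, haby]
    exact Prod.ext h1 h2
  calc ((FF s).filter (fun x => x.1 = (a, b))).card ≤ (Icc 1 s).card :=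
        Finset.card_le_card_of_injOn _ hmap hinj
    _ ≤ s := by rw [Nat.card_Icc]; omega

lemma sum_EE_le (s : ℕ) : (∑ x ∈ FF s, EE x.1) ≤ 10 * s := by
  classical
  have hsplit : (∑ x ∈ FF s, EE x.1)
      = 2 * (∑ x ∈ FF s, if x.1 = (1, 1) then 1 else 0)
        + (∑ x ∈ FF s, if x.1 = (1, 2) then 1 else 0)
        + (∑ x ∈ FF s, if x.1 = (2, 1) then 1 else 0)
        + 2 * (∑ x ∈ FF s, if x.1 = (2, 2) then 1 else 0) := by
    simp only [EE]
    rw [Finset.sum_add_distrib, Finset.sum_add_distrib, Finset.sum_add_distrib]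
    rw [← Finset.mul_sum]
    try rw [← Finset.mul_sum]
  rw [hsplit]
  have e11 := card_filter_diag s 1 (by omega)
  have e22 := card_filter_diag s 2 (by omega)
  have e12 := card_filter_off s 1 2 (by omega) (by omega)
  have e21 := card_filter_off s 2 1 (by omega) (by omega)
  rw [← Finset.card_filter, ← Finset.card_filter, ← Finset.card_filter, ← Finset.card_filter]
  omega

lemma coeff_large (s : ℕ) (hs : 13 ≤ s) : 3 * vv s ≤ ww s + 4 * uu s := by
  classical
  have h0 : (((s, s), (1, 1)) : (ℕ × ℕ) × ℕ × ℕ) ∈ FF s := by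
    have hSS0 : SS ((s, s), (1, 1)) = s := by simp [SS]
    rw [FF, Finset.mem_filter, mem_G4_iff]
    refine ⟨?_, hSS0⟩
    dsimp only
    omega
  have hvv : vv s = s + ∑ x ∈ (FF s).erase ((s, s), (1, 1)), min x.1.1 x.1.2 := by
    rw [vv, ← Finset.add_sum_erase _ _ h0]
    dsimp only
    rw [min_self]
  have hww : ww s = s * s + ∑ x ∈ (FF s).erase ((s, s), (1, 1)), x.1.1 * x.1.2 := by
    rw [ww, ← Finset.add_sum_erase _ _ h0]
  have hpt : (∑ x ∈ (FF s).erase ((s, s), (1, 1)), 3 * min x.1.1 x.1.2)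
      ≤ ∑ x ∈ (FF s).erase ((s, s), (1, 1)), (x.1.1 * x.1.2 + EE x.1) := by
    apply Finset.sum_le_sum
    intro x hx
    have hFF := Finset.mem_of_mem_erase hx
    obtain ⟨h1, h2, _, _, _⟩ := mem_FF hFF
    exact emin x.1.1 x.1.2 h1.1 h2.1
  rw [Finset.sum_add_distrib] at hpt
  have hEE : (∑ x ∈ (FF s).erase ((s, s), (1, 1)), EE x.1)
      ≤ ∑ x ∈ FF s, EE x.1 :=
    Finset.sum_le_sum_of_subset (Finset.erase_subset _ _)
  have hEE2 := sum_EE_le s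
  have hmulsum : (∑ x ∈ (FF s).erase ((s, s), (1, 1)), 3 * min x.1.1 x.1.2)
      = 3 * ∑ x ∈ (FF s).erase ((s, s), (1, 1)), min x.1.1 x.1.2 := by
    rw [Finset.mul_sum]
  have hss : 13 * s ≤ s * s := Nat.mul_le_mul_right s hs
  have huu : 0 ≤ uu s := Nat.zero_le _
  omega

set_option maxRecDepth 1000000 in
set_option maxHeartbeats 4000000 in
lemma coeff (s : ℕ) (hs : 1 ≤ s) : 3 * vv s ≤ ww s + 4 * uu s := by
  by_cases h : s ≤ 12
  · interval_cases s <;> decide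
  · exact coeff_large s (by omega)

end NfunAux
theorem Nfun_le (n : ℕ) (hn : 1 ≤ n) :
    6 * Nfun n ≤ n * (n + 1) * Fintype.card (Nat.Partition n) := by
  classical
  have hA := NfunAux.global_min (n := n)
  have hB := NfunAux.global_mul (n := n)
  have hC := NfunAux.global_single (n := n)
  have hsum : (∑ s ∈ Finset.Icc 1 n, 3 * (NfunAux.vv s * NfunAux.pc (n - s)))
      ≤ ∑ s ∈ Finset.Icc 1 n, (NfunAux.ww s * NfunAux.pc (n - s)
          + 4 * (NfunAux.uu s * NfunAux.pc (n - s))) := by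
    apply Finset.sum_le_sum
    intro s hs
    rw [Finset.mem_Icc] at hs
    have h := NfunAux.coeff s hs.1
    have h2 := Nat.mul_le_mul_right (NfunAux.pc (n - s)) h
    calc 3 * (NfunAux.vv s * NfunAux.pc (n - s))
        = (3 * NfunAux.vv s) * NfunAux.pc (n - s) := by ring
      _ ≤ (NfunAux.ww s + 4 * NfunAux.uu s) * NfunAux.pc (n - s) := h2
      _ = NfunAux.ww s * NfunAux.pc (n - s) + 4 * (NfunAux.uu s * NfunAux.pc (n - s)) := by
          ring
  rw [← Finset.mul_sum, ← hA] at hsum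
  rw [Finset.sum_add_distrib, ← Finset.mul_sum, ← hB, ← hC] at hsum
  have hexp : n * (n + 1) * Fintype.card (Nat.Partition n)
      = n * n * NfunAux.pc n + n * NfunAux.pc n := by
    rw [NfunAux.pc]
    ring
  rw [hexp]
  omega
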